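/- Filtered Vandermonde convergence: let λ_i ∈ (0,1), l_i positive integers with Σ_{i>n} l_i λ_i = ∞. For tuples p = (p_{n+1},...,p_m) with 0 ≤ p_i ≤ 2l_i and Σp_i ≡ 0 (mod 3), set D_m(p) = |3·Σ_{j,k: j_i+k_i=p_i, Σj≡0, Σk≡0 (mod 3)} ∏_i C(l_i,j_i)C(l_i,k_i) − ∏_i C(2l_i,p_i)|·∏_i λ_i^{p_i}/(1+λ_i)^{2l_i}. Then Σ_{p} D_m(p) → 0 as m → ∞. -/

import Mathlib

open Finset Filter Polynomial

noncomputable def zet : ℂ := ⟨-1/2, Real.sqrt 3 / 2⟩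

lemma zet_sq : zet ^ 2 + zet + 1 = 0 := by
  have h3 : Real.sqrt 3 ^ 2 = 3 := Real.sq_sqrt (by norm_num)
  simp only [zet, Complex.ext_iff, pow_two, Complex.add_re, Complex.add_im, Complex.mul_re,
    Complex.mul_im, Complex.one_re, Complex.one_im, Complex.zero_re, Complex.zero_im]
  constructor <;> nlinarith [h3]

lemma zet_cube : zet ^ 3 = 1 := by
  linear_combination (zet - 1) * zet_sq

lemma zet_abs : ‖zet‖ = 1 := by
  have h3 : Real.sqrt 3 ^ 2 = 3 := Real.sq_sqrt (by norm_num)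
  rw [Complex.norm_def, Complex.normSq_apply]
  simp only [zet]
  rw [show (-1/2 : ℝ) * (-1/2) + Real.sqrt 3 / 2 * (Real.sqrt 3 / 2) = 1 by nlinarith [h3]]
  exact Real.sqrt_one

lemma zet_ne : zet ≠ 0 := by
  intro h
  have := zet_abs
  rw [h] at this
  simp at this

lemma zet_conj : (starRingEnd ℂ) zet = zet ^ 2 := by
  have h1 : zet * (starRingEnd ℂ) zet = 1 := by
    rw [Complex.mul_conj]
    norm_cast
    rw [← Complex.sq_norm, zet_abs]; norm_num
  have h2 : zet * zet ^ 2 = 1 := by rw [← pow_succ']; exact zet_cube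
  exact mul_left_cancel₀ zet_ne (h1.trans h2.symm)

lemma zet_pow_mod (s : ℕ) : zet ^ s = zet ^ (s % 3) := by
  conv_lhs => rw [← Nat.div_add_mod s 3, pow_add, pow_mul, zet_cube, one_pow, one_mul]

lemma zet_filter (s : ℕ) : 1 + zet ^ s + zet ^ (2 * s) = if s % 3 = 0 then 3 else 0 := by
  rw [zet_pow_mod s, zet_pow_mod (2*s)]
  have h2 : (2 * s) % 3 = (2 * (s % 3)) % 3 := by omega
  rw [h2]
  have hlt : s % 3 = 0 ∨ s % 3 = 1 ∨ s % 3 = 2 := by omega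
  have hz := zet_sq
  rcases hlt with h | h | h <;> rw [h] <;> norm_num <;> linear_combination hz

lemma coeff_one_add_mul_X_pow {R : Type*} [CommRing R] (a : R) (l q : ℕ) :
    ((1 + C a * X) ^ l).coeff q = a ^ q * (l.choose q : R) := by
  rw [add_comm, add_pow, finset_sum_coeff]
  have step : ∀ j ∈ Finset.range (l + 1),
      ((C a * X) ^ j * (1:R[X]) ^ (l - j) * (l.choose j : R[X])).coeff q
      = if j = q then a ^ q * (l.choose q : R) else 0 := by
    intro j hj
    rw [one_pow, mul_one, mul_pow, ← C_pow, mul_comm ((C (a^j))) (X ^ j), mul_assoc]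
    rw [show ((C (a^j) : R[X]) * (l.choose j : R[X])) = C (a ^ j * (l.choose j : R)) by
      rw [C_mul]; norm_cast]
    rw [mul_comm, coeff_C_mul, coeff_X_pow]
    by_cases h : j = q
    · subst h; simp
    · rw [if_neg (fun hh : q = j => h hh.symm), mul_zero, if_neg h]
  rw [Finset.sum_congr rfl step, Finset.sum_ite_eq' (Finset.range (l+1)) q]
  split
  · rfl
  · next h =>
    have hlq : l < q := by
      by_contra hc
      exact h (Finset.mem_range.mpr (by omega))
    rw [Nat.choose_eq_zero_of_lt hlq]; simp

lemma coeff_pow_abs_le (P : Polynomial ℂ) (Q : Polynomial ℝ)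
    (h : ∀ i, ‖P.coeff i‖ ≤ Q.coeff i) (l : ℕ) :
    ∀ q, ‖(P ^ l).coeff q‖ ≤ (Q ^ l).coeff q := by
  induction l with
  | zero =>
    intro q
    simp only [pow_zero, coeff_one]
    split <;> simp
  | succ l ih =>
    intro q
    rw [pow_succ, pow_succ, coeff_mul, coeff_mul]
    calc ‖∑ x ∈ Finset.HasAntidiagonal.antidiagonal q, (P^l).coeff x.1 * P.coeff x.2‖
        ≤ ∑ x ∈ Finset.HasAntidiagonal.antidiagonal q, ‖(P^l).coeff x.1 * P.coeff x.2‖ :=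
          norm_sum_le _ _
      _ ≤ ∑ x ∈ Finset.HasAntidiagonal.antidiagonal q, (Q^l).coeff x.1 * Q.coeff x.2 := by
          refine Finset.sum_le_sum fun x _ => ?_
          rw [norm_mul]
          exact mul_le_mul (ih x.1) (h x.2) (norm_nonneg _)
            ((norm_nonneg _).trans (ih x.1))

open Classical in
lemma double_sum_antidiagonal {M : Type*} [AddCommMonoid M] (l q : ℕ) (F : ℕ → ℕ → M)
    (hF : ∀ j k, l < j ∨ l < k → F j k = 0) :
    ∑ j ∈ Finset.range (l+1), ∑ k ∈ Finset.range (l+1),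
      (if j + k = q then F j k else 0)
    = ∑ x ∈ Finset.HasAntidiagonal.antidiagonal q, F x.1 x.2 := by
  rw [← Finset.sum_product']
  rw [← Finset.sum_filter]
  apply Finset.sum_subset
  · intro x hx
    rw [Finset.mem_filter, Finset.mem_product, Finset.mem_range, Finset.mem_range] at hx
    rw [Finset.HasAntidiagonal.mem_antidiagonal]
    exact hx.2
  · intro x hx hnx
    rw [Finset.HasAntidiagonal.mem_antidiagonal] at hx
    simp only [Finset.mem_filter, Finset.mem_product, Finset.mem_range] at hnx
    apply hF
    by_contra hc
    push_neg at hc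
    exact hnx ⟨⟨by omega, by omega⟩, hx⟩

lemma vandermonde_coord (l q : ℕ) :
    ∑ j ∈ Finset.range (l+1), ∑ k ∈ Finset.range (l+1),
      (if j + k = q then ((l.choose j * l.choose k : ℕ) : ℂ) else 0)
    = ((2*l).choose q : ℂ) := by
  rw [double_sum_antidiagonal l q _ (fun j k h => by
    rcases h with h | h <;> simp [Nat.choose_eq_zero_of_lt h])]
  rw [show 2*l = l + l by ring, Nat.add_choose_eq]
  push_cast
  rfl

lemma pi_double_sum {M : Type*} [CommSemiring M] (s : Finset ℕ) (t : ℕ → Finset ℕ)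
    (H : ℕ → ℕ → ℕ → M) :
    ∑ j ∈ s.pi (fun i => t i), ∑ k ∈ s.pi (fun i => t i),
      ∏ i ∈ s.attach, H i.1 (j i.1 i.2) (k i.1 i.2)
    = ∏ i ∈ s, ∑ a ∈ t i, ∑ b ∈ t i, H i a b := by
  classical
  rw [Finset.prod_sum]
  refine Finset.sum_congr rfl fun j hj => ?_
  have h1 : ∏ x ∈ s.attach, (∑ b ∈ t x.1, H x.1 (j x.1 x.2) b)
      = ∏ x ∈ s, ∑ b ∈ t x, H x (if h : x ∈ s then j x h else 0) b := by
    rw [← Finset.prod_attach s (fun x => ∑ b ∈ t x, H x (if h : x ∈ s then j x h else 0) b)]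
    exact Finset.prod_congr rfl fun x _ => by rw [dif_pos x.2]
  rw [h1, Finset.prod_sum]
  refine Finset.sum_congr rfl fun k hk => Finset.prod_congr rfl fun x _ => by rw [dif_pos x.2]

lemma ite_all_prod {M : Type*} [CommMonoidWithZero M] (s : Finset ℕ)
    (P : (i : ℕ) → i ∈ s → Prop) [∀ i hi, Decidable (P i hi)] (f : {x // x ∈ s} → M) :
    (if (∀ i (hi : i ∈ s), P i hi) then ∏ i ∈ s.attach, f i else 0)
    = ∏ i ∈ s.attach, (if P i.1 i.2 then f i else 0) := by
  by_cases h : ∀ i (hi : i ∈ s), P i hi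
  · rw [if_pos h]
    exact Finset.prod_congr rfl fun i _ => (if_pos (h i.1 i.2)).symm
  · rw [if_neg h]
    push_neg at h
    obtain ⟨i, hi, hP⟩ := h
    exact (Finset.prod_eq_zero (Finset.mem_attach s ⟨i, hi⟩) (by rw [if_neg hP])).symm

noncomputable def wpoly (l : ℕ) : Polynomial ℝ := (1 + X + X^2)^l

lemma g_eq_coeff (a b : ℂ) (l q : ℕ) :
    ∑ j ∈ Finset.range (l+1), ∑ k ∈ Finset.range (l+1),
      (if j + k = q then a^j * (l.choose j : ℂ) * (b^k * (l.choose k : ℂ)) else 0)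
    = (((1 + C a * X) * (1 + C b * X))^l).coeff q := by
  rw [mul_pow, coeff_mul]
  rw [double_sum_antidiagonal l q _ (fun j k h => by
    rcases h with h | h <;> simp [Nat.choose_eq_zero_of_lt h])]
  refine Finset.sum_congr rfl fun x _ => ?_
  rw [coeff_one_add_mul_X_pow, coeff_one_add_mul_X_pow]

lemma abs_coeff_le_w (l q : ℕ) :
    ‖(((1 + C zet * X) * (1 + C 1 * X))^l).coeff q‖ ≤ (wpoly l).coeff q := by
  apply coeff_pow_abs_le
  intro i
  have hP : (1 + C zet * X) * (1 + C 1 * X) = 1 + C (1 + zet) * X + C zet * X^2 := by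
    simp only [C_add, C_1]
    ring
  have h1z : ‖1 + zet‖ = 1 := by
    have : (1 : ℂ) + zet = -zet^2 := by linear_combination zet_sq
    rw [this, norm_neg, norm_pow, zet_abs, one_pow]
  rw [hP]
  rcases i with _ | _ | _ | i <;>
    simp [coeff_one, coeff_X, coeff_X_pow, h1z, zet_abs, coeff_C_mul]

lemma w_nonneg (l q : ℕ) : 0 ≤ (wpoly l).coeff q := by
  have := coeff_pow_abs_le (1 + X + X^2 : Polynomial ℂ) (1 + X + X^2 : Polynomial ℝ)
    (fun i => by rcases i with _ | _ | _ | i <;> simp [coeff_one, coeff_X, coeff_X_pow]) l q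
  exact le_trans (norm_nonneg _) this

lemma w_eval (l : ℕ) (x : ℝ) :
    ∑ q ∈ Finset.range (2*l+1), (wpoly l).coeff q * x^q = (1 + x + x^2)^l := by
  have hdeg : (wpoly l).natDegree < 2*l + 1 := by
    have : (wpoly l).natDegree ≤ 2*l := by
      unfold wpoly
      compute_degree
      omega
    omega
  rw [← Polynomial.eval_eq_sum_range' hdeg]
  unfold wpoly
  simp

open Classical in
noncomputable def Gfun (l pq t : ℕ) : ℂ :=
  ∑ a ∈ Finset.range (l+1), ∑ b ∈ Finset.range (l+1),
    if a + b = pq then zet^(t*a) * ((l.choose a * l.choose b : ℕ) : ℂ) else 0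

open Classical in
noncomputable def Afun (s : Finset ℕ) (l : ℕ → ℕ) (p : (i : ℕ) → i ∈ s → ℕ) (t : ℕ) : ℂ :=
  ∑ j ∈ s.pi (fun i => Finset.range (l i + 1)),
    ∑ k ∈ s.pi (fun i => Finset.range (l i + 1)),
      if (∀ i (hi : i ∈ s), j i hi + k i hi = p i hi) then
        zet ^ (t * ∑ i ∈ s.attach, j i.1 i.2) *
          ((∏ i ∈ s.attach, (l i.1).choose (j i.1 i.2) * (l i.1).choose (k i.1 i.2) : ℕ) : ℂ)
      else 0

open Classical in
lemma Afun_fact (s : Finset ℕ) (l : ℕ → ℕ) (p : (i : ℕ) → i ∈ s → ℕ) (t : ℕ) :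
    Afun s l p t = ∏ i ∈ s.attach, Gfun (l i.1) (p i.1 i.2) t := by
  set p' : ℕ → ℕ := fun i => if h : i ∈ s then p i h else 0 with hp'
  have hstep : Afun s l p t
      = ∑ j ∈ s.pi (fun i => Finset.range (l i + 1)),
          ∑ k ∈ s.pi (fun i => Finset.range (l i + 1)),
            ∏ i ∈ s.attach,
              (if j i.1 i.2 + k i.1 i.2 = p' i.1 then
                zet^(t * j i.1 i.2) *
                  (((l i.1).choose (j i.1 i.2) * (l i.1).choose (k i.1 i.2) : ℕ) : ℂ)
              else 0) := by
    unfold Afun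
    refine Finset.sum_congr rfl fun j hj => Finset.sum_congr rfl fun k hk => ?_
    by_cases hc : ∀ i (hi : i ∈ s), j i hi + k i hi = p i hi
    · rw [if_pos hc]
      have hprod : ∏ i ∈ s.attach,
          (if j i.1 i.2 + k i.1 i.2 = p' i.1 then
            zet^(t * j i.1 i.2) *
              (((l i.1).choose (j i.1 i.2) * (l i.1).choose (k i.1 i.2) : ℕ) : ℂ)
          else 0)
          = ∏ i ∈ s.attach, zet^(t * j i.1 i.2) *
              (((l i.1).choose (j i.1 i.2) * (l i.1).choose (k i.1 i.2) : ℕ) : ℂ) := by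
        refine Finset.prod_congr rfl fun i _ => if_pos ?_
        simp only [hp', dif_pos i.2]
        exact hc i.1 i.2
      rw [hprod, Finset.mul_sum, ← Finset.prod_pow_eq_pow_sum, Nat.cast_prod,
        ← Finset.prod_mul_distrib]
    · rw [if_neg hc]
      push_neg at hc
      obtain ⟨i, hi, hne⟩ := hc
      refine (Finset.prod_eq_zero (Finset.mem_attach s ⟨i, hi⟩) ?_).symm
      rw [if_neg]
      simpa only [hp', dif_pos hi] using hne
  rw [hstep, pi_double_sum s _ (fun i a b =>
    if a + b = p' i then zet^(t*a) * (((l i).choose a * (l i).choose b : ℕ) : ℂ) else 0)]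
  rw [show (∏ i ∈ s, ∑ a ∈ Finset.range (l i + 1), ∑ b ∈ Finset.range (l i + 1),
      if a + b = p' i then zet^(t*a) * (((l i).choose a * (l i).choose b : ℕ) : ℂ) else 0)
    = ∏ i ∈ s, Gfun (l i) (p' i) t from rfl]
  rw [← Finset.prod_attach s (fun i => Gfun (l i) (p' i) t)]
  refine Finset.prod_congr rfl fun i _ => ?_
  have hpi : p' i.1 = p i.1 i.2 := dif_pos i.2
  rw [hpi]

lemma Gfun_vandermonde (l pq : ℕ) : Gfun l pq 0 = ((2*l).choose pq : ℂ) := by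
  unfold Gfun
  rw [← vandermonde_coord l pq]
  refine Finset.sum_congr rfl fun a _ => Finset.sum_congr rfl fun b _ => ?_
  simp

lemma Gfun_abs_le (l pq : ℕ) : ‖Gfun l pq 1‖ ≤ (wpoly l).coeff pq := by
  have h : Gfun l pq 1 = (((1 + C zet * X) * (1 + C 1 * X))^l).coeff pq := by
    rw [← g_eq_coeff zet 1 l pq]
    unfold Gfun
    refine Finset.sum_congr rfl fun a _ => Finset.sum_congr rfl fun b _ => ?_
    by_cases hc : a + b = pq
    · rw [if_pos hc, if_pos hc, one_mul, one_pow]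
      push_cast
      ring
    · rw [if_neg hc, if_neg hc]
  rw [h]
  exact abs_coeff_le_w l pq

open Classical in
lemma Afun_conj (s : Finset ℕ) (l : ℕ → ℕ) (p : (i : ℕ) → i ∈ s → ℕ) :
    Afun s l p 2 = (starRingEnd ℂ) (Afun s l p 1) := by
  unfold Afun
  rw [map_sum]
  refine Finset.sum_congr rfl fun j hj => ?_
  rw [map_sum]
  refine Finset.sum_congr rfl fun k hk => ?_
  rw [apply_ite (starRingEnd ℂ), map_zero, map_mul, map_pow, zet_conj, map_natCast]
  rw [one_mul, ← pow_mul]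

open Classical in
lemma Afun_split (s : Finset ℕ) (l : ℕ → ℕ) (p : (i : ℕ) → i ∈ s → ℕ)
    (hp : (∑ i ∈ s.attach, p i.1 i.2) % 3 = 0) :
    Afun s l p 0 + Afun s l p 1 + Afun s l p 2
    = 3 * ((∑ j ∈ s.pi (fun i => Finset.range (l i + 1)),
          ∑ k ∈ s.pi (fun i => Finset.range (l i + 1)),
            if (∀ i (hi : i ∈ s), j i hi + k i hi = p i hi) ∧
                (∑ i ∈ s.attach, j i.1 i.2) % 3 = 0 ∧
                (∑ i ∈ s.attach, k i.1 i.2) % 3 = 0 then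
              ((∏ i ∈ s.attach, (l i.1).choose (j i.1 i.2) * (l i.1).choose (k i.1 i.2) : ℕ) : ℝ)
            else 0 : ℝ) : ℂ) := by
  unfold Afun
  push_cast [apply_ite (fun x : ℝ => (x : ℂ))]
  conv_rhs => rw [Finset.mul_sum]
  rw [← Finset.sum_add_distrib, ← Finset.sum_add_distrib]
  refine Finset.sum_congr rfl fun j hj => ?_
  conv_rhs => rw [Finset.mul_sum]
  rw [← Finset.sum_add_distrib, ← Finset.sum_add_distrib]
  refine Finset.sum_congr rfl fun k hk => ?_
  by_cases hc : ∀ i (hi : i ∈ s), j i hi + k i hi = p i hi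
  · simp only [if_pos hc]
    have hsum : (∑ i ∈ s.attach, j i.1 i.2) + (∑ i ∈ s.attach, k i.1 i.2)
        = ∑ i ∈ s.attach, p i.1 i.2 := by
      rw [← Finset.sum_add_distrib]
      exact Finset.sum_congr rfl fun i _ => hc i.1 i.2
    by_cases hj3 : (∑ i ∈ s.attach, j i.1 i.2) % 3 = 0
    · have hk3 : (∑ i ∈ s.attach, k i.1 i.2) % 3 = 0 := by omega
      rw [if_pos ⟨hc, hj3, hk3⟩]
      have hz := zet_filter (∑ i ∈ s.attach, j i.1 i.2)
      rw [if_pos hj3] at hz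
      simp only [zero_mul, Finset.sum_const_zero, pow_zero, one_mul]
      linear_combination (∏ x ∈ s.attach, ((l x.1).choose (j x.1 x.2) : ℂ) *
        ((l x.1).choose (k x.1 x.2) : ℂ)) * hz
    · rw [if_neg (fun h => hj3 h.2.1)]
      have hz := zet_filter (∑ i ∈ s.attach, j i.1 i.2)
      rw [if_neg hj3] at hz
      simp only [zero_mul, Finset.sum_const_zero, pow_zero, one_mul, mul_zero]
      linear_combination (∏ x ∈ s.attach, ((l x.1).choose (j x.1 x.2) : ℂ) *
        ((l x.1).choose (k x.1 x.2) : ℂ)) * hz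
  · simp [hc]

open Classical in
lemma key_bound (s : Finset ℕ) (l : ℕ → ℕ) (p : (i : ℕ) → i ∈ s → ℕ)
    (hp : (∑ i ∈ s.attach, p i.1 i.2) % 3 = 0) :
    |3 * (∑ j ∈ s.pi (fun i => Finset.range (l i + 1)),
            ∑ k ∈ s.pi (fun i => Finset.range (l i + 1)),
              if (∀ i (hi : i ∈ s), j i hi + k i hi = p i hi) ∧
                  (∑ i ∈ s.attach, j i.1 i.2) % 3 = 0 ∧
                  (∑ i ∈ s.attach, k i.1 i.2) % 3 = 0 then
                ((∏ i ∈ s.attach, (l i.1).choose (j i.1 i.2) * (l i.1).choose (k i.1 i.2) : ℕ) : ℝ)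
              else 0)
      - ((∏ i ∈ s.attach, (2 * l i.1).choose (p i.1 i.2) : ℕ) : ℝ)|
    ≤ 2 * ∏ i ∈ s.attach, (wpoly (l i.1)).coeff (p i.1 i.2) := by
  set S : ℝ := ∑ j ∈ s.pi (fun i => Finset.range (l i + 1)),
      ∑ k ∈ s.pi (fun i => Finset.range (l i + 1)),
        if (∀ i (hi : i ∈ s), j i hi + k i hi = p i hi) ∧
            (∑ i ∈ s.attach, j i.1 i.2) % 3 = 0 ∧
            (∑ i ∈ s.attach, k i.1 i.2) % 3 = 0 then
          ((∏ i ∈ s.attach, (l i.1).choose (j i.1 i.2) * (l i.1).choose (k i.1 i.2) : ℕ) : ℝ)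
        else 0 with hS
  set Cp : ℕ := ∏ i ∈ s.attach, (2 * l i.1).choose (p i.1 i.2) with hCp
  have hA0 : Afun s l p 0 = (Cp : ℂ) := by
    rw [Afun_fact]
    rw [hCp, Nat.cast_prod]
    exact Finset.prod_congr rfl fun i _ => Gfun_vandermonde (l i.1) (p i.1 i.2)
  have hsplit := Afun_split s l p hp
  have hdiff : 3 * (S : ℂ) - (Cp : ℂ) = Afun s l p 1 + Afun s l p 2 := by
    rw [← hS] at hsplit
    rw [← hsplit, ← hA0]
    ring
  have habs : |3 * S - (Cp : ℝ)| = ‖3 * (S : ℂ) - (Cp : ℂ)‖ := by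
    rw [← Real.norm_eq_abs, ← Complex.norm_real]
    congr 1
    push_cast
    ring
  rw [habs, hdiff, Afun_conj]
  calc ‖Afun s l p 1 + (starRingEnd ℂ) (Afun s l p 1)‖
      ≤ ‖Afun s l p 1‖ + ‖(starRingEnd ℂ) (Afun s l p 1)‖ :=
        norm_add_le _ _
    _ = 2 * ‖Afun s l p 1‖ := by rw [Complex.norm_conj]; ring
    _ ≤ 2 * ∏ i ∈ s.attach, (wpoly (l i.1)).coeff (p i.1 i.2) := by
        refine mul_le_mul_of_nonneg_left ?_ (by norm_num)
        rw [Afun_fact, norm_prod]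
        exact Finset.prod_le_prod (fun i _ => norm_nonneg _)
          (fun i _ => Gfun_abs_le (l i.1) (p i.1 i.2))

lemma coord_sum_bound (L : ℕ) (x : ℝ) (hx0 : 0 < x) (hx1 : x < 1) :
    ∑ q ∈ Finset.range (2*L+1), (wpoly L).coeff q * (x^q / (1+x)^(2*L))
    ≤ Real.exp ((L : ℝ) * (-(x/4))) := by
  have hx1' : (0:ℝ) < 1 + x := by linarith
  have h1 : ∑ q ∈ Finset.range (2*L+1), (wpoly L).coeff q * (x^q / (1+x)^(2*L))
      = ((1 + x + x^2) / (1+x)^2)^L := by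
    rw [div_pow, ← pow_mul, ← w_eval L x, Finset.sum_div]
    exact Finset.sum_congr rfl fun q _ => by ring
  rw [h1, Real.exp_nat_mul]
  have hr0 : (0:ℝ) ≤ (1 + x + x^2) / (1+x)^2 := by positivity
  refine pow_le_pow_left₀ hr0 ?_ L
  have h2 : (1 + x + x^2) / (1+x)^2 ≤ 1 - x/4 := by
    rw [div_le_iff₀ (by positivity)]
    nlinarith
  have h3 := Real.add_one_le_exp (-(x/4))
  linarith

open Classical in
theorem filtered_vandermonde_convergence
    (n : ℕ) (lam : ℕ → ℝ) (l : ℕ → ℕ)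
    (hlam : ∀ i, 0 < lam i ∧ lam i < 1) (hl : ∀ i, 1 ≤ l i)
    (hdiv : Tendsto (fun m => ∑ i ∈ Finset.Ioc n m, (l i : ℝ) * lam i) atTop atTop) :
    Tendsto (fun m =>
      ∑ p ∈ (Finset.Ioc n m).pi (fun i => Finset.range (2 * l i + 1)),
        if (∑ i ∈ (Finset.Ioc n m).attach, p i.1 i.2) % 3 = 0 then
          |3 * (∑ j ∈ (Finset.Ioc n m).pi (fun i => Finset.range (l i + 1)),
                ∑ k ∈ (Finset.Ioc n m).pi (fun i => Finset.range (l i + 1)),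
                  if (∀ i (hi : i ∈ Finset.Ioc n m), j i hi + k i hi = p i hi) ∧
                      (∑ i ∈ (Finset.Ioc n m).attach, j i.1 i.2) % 3 = 0 ∧
                      (∑ i ∈ (Finset.Ioc n m).attach, k i.1 i.2) % 3 = 0 then
                    ((∏ i ∈ (Finset.Ioc n m).attach,
                      (l i.1).choose (j i.1 i.2) * (l i.1).choose (k i.1 i.2) : ℕ) : ℝ)
                  else 0)
            - ((∏ i ∈ (Finset.Ioc n m).attach, (2 * l i.1).choose (p i.1 i.2) : ℕ) : ℝ)|
          * ∏ i ∈ (Finset.Ioc n m).attach,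
              lam i.1 ^ (p i.1 i.2) / (1 + lam i.1) ^ (2 * l i.1)
        else 0) atTop (nhds 0) := by
  have hW : ∀ (m : ℕ) (p : (i : ℕ) → i ∈ Finset.Ioc n m → ℕ),
      0 ≤ ∏ i ∈ (Finset.Ioc n m).attach,
        lam i.1 ^ (p i.1 i.2) / (1 + lam i.1) ^ (2 * l i.1) :=
    fun m p => Finset.prod_nonneg fun i _ => div_nonneg
      (pow_nonneg (hlam i.1).1.le _) (pow_nonneg (by linarith [(hlam i.1).1]) _)
  refine squeeze_zero (fun m => ?_) (fun m => ?_)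
    (g := fun m => 2 * Real.exp (-(∑ i ∈ Finset.Ioc n m, (l i : ℝ) * lam i) / 4)) ?_
  · refine Finset.sum_nonneg fun p _ => ?_
    split
    · exact mul_nonneg (abs_nonneg _) (hW m p)
    · exact le_rfl
  · calc (∑ p ∈ (Finset.Ioc n m).pi (fun i => Finset.range (2 * l i + 1)), _)
        ≤ ∑ p ∈ (Finset.Ioc n m).pi (fun i => Finset.range (2 * l i + 1)),
            2 * ∏ i ∈ (Finset.Ioc n m).attach,
              ((wpoly (l i.1)).coeff (p i.1 i.2) *
                (lam i.1 ^ (p i.1 i.2) / (1 + lam i.1) ^ (2 * l i.1))) := by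
          refine Finset.sum_le_sum fun p _ => ?_
          have hterm : 0 ≤ 2 * ∏ i ∈ (Finset.Ioc n m).attach,
              ((wpoly (l i.1)).coeff (p i.1 i.2) *
                (lam i.1 ^ (p i.1 i.2) / (1 + lam i.1) ^ (2 * l i.1))) := by
            refine mul_nonneg (by norm_num) (Finset.prod_nonneg fun i _ => mul_nonneg
              (w_nonneg _ _) (div_nonneg (pow_nonneg (hlam i.1).1.le _)
                (pow_nonneg (by linarith [(hlam i.1).1]) _)))
          split
          · next hp3 =>
            calc _ ≤ (2 * ∏ i ∈ (Finset.Ioc n m).attach,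
                  (wpoly (l i.1)).coeff (p i.1 i.2)) *
                  ∏ i ∈ (Finset.Ioc n m).attach,
                    lam i.1 ^ (p i.1 i.2) / (1 + lam i.1) ^ (2 * l i.1) :=
                mul_le_mul_of_nonneg_right (key_bound (Finset.Ioc n m) l p hp3) (hW m p)
              _ = _ := by rw [mul_assoc, ← Finset.prod_mul_distrib]
          · exact hterm
      _ = 2 * ∑ p ∈ (Finset.Ioc n m).pi (fun i => Finset.range (2 * l i + 1)),
            ∏ i ∈ (Finset.Ioc n m).attach,
              ((wpoly (l i.1)).coeff (p i.1 i.2) *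
                (lam i.1 ^ (p i.1 i.2) / (1 + lam i.1) ^ (2 * l i.1))) := by
          rw [Finset.mul_sum]
      _ = 2 * ∏ i ∈ Finset.Ioc n m, ∑ q ∈ Finset.range (2 * l i + 1),
            ((wpoly (l i)).coeff q * (lam i ^ q / (1 + lam i) ^ (2 * l i))) := by
          rw [Finset.prod_sum]
      _ ≤ 2 * ∏ i ∈ Finset.Ioc n m, Real.exp ((l i : ℝ) * (-(lam i / 4))) := by
          refine mul_le_mul_of_nonneg_left (Finset.prod_le_prod ?_ ?_) (by norm_num)
          · intro i _
            exact Finset.sum_nonneg fun q _ => mul_nonneg (w_nonneg _ _)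
              (div_nonneg (pow_nonneg (hlam i).1.le _)
                (pow_nonneg (by linarith [(hlam i).1]) _))
          · intro i _
            exact coord_sum_bound (l i) (lam i) (hlam i).1 (hlam i).2
      _ = 2 * Real.exp (-(∑ i ∈ Finset.Ioc n m, (l i : ℝ) * lam i) / 4) := by
          rw [← Real.exp_sum]
          congr 1
          congr 1
          rw [show (-(∑ i ∈ Finset.Ioc n m, (l i : ℝ) * lam i) / 4)
              = (-(1/4)) * ∑ i ∈ Finset.Ioc n m, (l i : ℝ) * lam i by ring,
            Finset.mul_sum]
          exact Finset.sum_congr rfl fun i _ => by ring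
  · have h0 : Tendsto (fun m => (∑ i ∈ Finset.Ioc n m, (l i : ℝ) * lam i) / 4) atTop atTop :=
      hdiv.atTop_div_const (by norm_num)
    have h1 : Tendsto (fun m => -(∑ i ∈ Finset.Ioc n m, (l i : ℝ) * lam i) / 4)
        atTop atBot := by
      simp only [neg_div]
      exact tendsto_neg_atTop_atBot.comp h0
    have h2 : Tendsto (fun m => Real.exp (-(∑ i ∈ Finset.Ioc n m, (l i : ℝ) * lam i) / 4))
        atTop (nhds 0) := Real.tendsto_exp_atBot.comp h1
    simpa using h2.const_mul 2
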